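/- Let Φ be a complex-linear endomorphism of the space of n×n complex matrices of Kraus form Φ(ρ) = Σ_{m ∈ A} M_m ρ M_m† for a finite family (M_m) of n×n complex matrices, and let Φ* denote its adjoint with respect to the Hilbert–Schmidt inner product. If there exists an invertible complex-linear map 𝒰 on n×n complex matrices with 𝒰 ∘ Φ* ∘ 𝒰⁻¹ = −Φ, then Tr(M_m) = 0 for every m ∈ A. -/

import Mathlib

open Matrix

theorem stmt_15 (n k : ℕ) (M : Fin k → Matrix (Fin n) (Fin n) ℂ)
    (T : Matrix (Fin n) (Fin n) ℂ →ₗ[ℂ] Matrix (Fin n) (Fin n) ℂ)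
    (hT : ∀ ρ, T ρ = ∑ m, M m * ρ * (M m)ᴴ)
    (Tstar : Matrix (Fin n) (Fin n) ℂ →ₗ[ℂ] Matrix (Fin n) (Fin n) ℂ)
    (hTstar : ∀ A B, (Aᴴ * T B).trace = ((Tstar A)ᴴ * B).trace)
    (hsym : ∃ U : Matrix (Fin n) (Fin n) ℂ ≃ₗ[ℂ] Matrix (Fin n) (Fin n) ℂ,
      ∀ ρ, U (Tstar (U.symm ρ)) = -(T ρ)) :
    ∀ m, (M m).trace = 0 := by
  obtain ⟨U, hU⟩ := hsym
  set b := Matrix.stdBasis ℂ (Fin n) (Fin n) with hb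
  have hbstd : ∀ q : Fin n × Fin n, b q = single q.1 q.2 (1:ℂ) := by
    intro q
    rw [hb, show q = (q.1, q.2) from rfl]
    exact Matrix.stdBasis_eq_single (R := ℂ) q.1 q.2
  -- repr in the standard basis
  have hrepr : ∀ (X : Matrix (Fin n) (Fin n) ℂ) (p : Fin n × Fin n),
      b.repr X p = X p.1 p.2 := by
    intro X p
    have hX : X = ∑ q : Fin n × Fin n, b.repr X q • b q := (b.sum_repr X).symm
    have h := congrFun (congrFun hX p.1) p.2
    rw [h, Matrix.sum_apply]
    rw [Fintype.sum_eq_single p]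
    · simp [hbstd, Matrix.single]
    · intro q hq
      simp only [Matrix.smul_apply, hbstd, Matrix.single]
      have : ¬(q.1 = p.1 ∧ q.2 = p.2) := by
        intro ⟨h1, h2⟩; exact hq (Prod.ext h1 h2)
      simp [Matrix.of_apply, this]
  -- trace of a linear endomorphism of matrices
  have htr : ∀ (L : Matrix (Fin n) (Fin n) ℂ →ₗ[ℂ] Matrix (Fin n) (Fin n) ℂ),
      LinearMap.trace ℂ _ L = ∑ i : Fin n, ∑ j : Fin n,
        (L (single i j 1)) i j := by
    intro L
    rw [LinearMap.trace_eq_matrix_trace ℂ b, Matrix.trace]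
    rw [← Fintype.sum_prod_type']
    refine Finset.sum_congr rfl fun p _ => ?_
    simp [Matrix.diag, LinearMap.toMatrix_apply, hrepr, hbstd]
  -- trace of T
  have h1 : LinearMap.trace ℂ _ T
      = ∑ m, (M m).trace * star ((M m).trace) := by
    rw [htr]
    have hentry : ∀ i j : Fin n, (T (single i j 1)) i j
        = ∑ m, M m i i * star (M m j j) := by
      intro i j
      rw [hT, Matrix.sum_apply]
      refine Finset.sum_congr rfl fun m _ => ?_
      rw [Matrix.mul_apply]
      rw [Fintype.sum_eq_single j]
      · rw [Matrix.mul_single_apply_same, conjTranspose_apply]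
        ring
      · intro c hc
        rw [Matrix.mul_single_apply_of_ne 1 i j i c hc, zero_mul]
    simp_rw [hentry]
    calc ∑ i : Fin n, ∑ j : Fin n, ∑ m, M m i i * star (M m j j)
        = ∑ i : Fin n, ∑ m, ∑ j : Fin n, M m i i * star (M m j j) :=
          Finset.sum_congr rfl fun i _ => Finset.sum_comm
      _ = ∑ m, ∑ i : Fin n, ∑ j : Fin n, M m i i * star (M m j j) :=
          Finset.sum_comm
      _ = ∑ m, (M m).trace * star ((M m).trace) := by
          refine Finset.sum_congr rfl fun m _ => ?_
          rw [Matrix.trace, star_sum, Finset.sum_mul_sum]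
          simp [Matrix.diag]
  -- conjugate transpose of a standard basis matrix
  have hE : ∀ i j : Fin n, (single i j (1:ℂ))ᴴ = single j i 1 := by
    intro i j
    ext a c
    simp [conjTranspose_apply, Matrix.single, and_comm]
  -- trace pairings with standard basis matrices
  have key : ∀ (X : Matrix (Fin n) (Fin n) ℂ) (i j : Fin n),
      ((single i j (1:ℂ))ᴴ * X).trace = X i j := by
    intro X i j
    rw [hE, Matrix.trace]
    rw [Fintype.sum_eq_single j]
    · rw [Matrix.diag_apply, Matrix.single_mul_apply_same, one_mul]
    · intro c hc
      rw [Matrix.diag_apply, Matrix.single_mul_apply_of_ne 1 j i c c hc]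
  have key2 : ∀ (Y : Matrix (Fin n) (Fin n) ℂ) (i j : Fin n),
      (Yᴴ * single i j (1:ℂ)).trace = star (Y i j) := by
    intro Y i j
    rw [Matrix.trace]
    rw [Fintype.sum_eq_single j]
    · rw [Matrix.diag_apply, Matrix.mul_single_apply_same,
        conjTranspose_apply, mul_one]
    · intro c hc
      rw [Matrix.diag_apply, Matrix.mul_single_apply_of_ne 1 i j c c hc]
  -- entries of Tstar on basis matrices
  have hstar_entry : ∀ i j : Fin n, (Tstar (single i j (1:ℂ))) i j
      = star ((T (single i j (1:ℂ))) i j) := by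
    intro i j
    have h := hTstar (single i j 1) (single i j 1)
    rw [key, key2] at h
    rw [h, star_star]
  -- trace of Tstar is the conjugate of trace of T
  have h2 : LinearMap.trace ℂ _ Tstar = star (LinearMap.trace ℂ _ T) := by
    rw [htr, htr, star_sum]
    refine Finset.sum_congr rfl fun i _ => ?_
    rw [star_sum]
    exact Finset.sum_congr rfl fun j _ => hstar_entry i j
  -- similarity gives trace Tstar = - trace T
  have hconj : U.conj Tstar = -T := by
    refine LinearMap.ext fun ρ => ?_
    simp only [LinearEquiv.conj_apply, LinearMap.coe_comp, Function.comp_apply,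
      LinearEquiv.coe_coe, LinearMap.neg_apply]
    exact hU ρ
  have h3 : LinearMap.trace ℂ _ Tstar = - LinearMap.trace ℂ _ T := by
    have h := LinearMap.trace_conj' Tstar U
    rw [hconj, map_neg] at h
    exact h.symm
  -- the trace of T is a nonnegative real
  have h5 : (↑(∑ m, Complex.normSq ((M m).trace)) : ℂ) = LinearMap.trace ℂ _ T := by
    rw [h1]
    push_cast
    refine Finset.sum_congr rfl fun m _ => ?_
    rw [← Complex.mul_conj]
    rfl
  -- conclude
  have h4 : (↑(∑ m, Complex.normSq ((M m).trace)) : ℂ)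
      = -(↑(∑ m, Complex.normSq ((M m).trace)) : ℂ) := by
    have h := h3
    rw [h2, ← h5] at h
    rw [Complex.star_def, Complex.conj_ofReal] at h
    rw [h5] at h ⊢
    exact h
  have h6 : (∑ m, Complex.normSq ((M m).trace)) = 0 := by
    have h7 : (∑ m, Complex.normSq ((M m).trace))
        + (∑ m, Complex.normSq ((M m).trace)) = 0 := by
      exact_mod_cast congrArg Complex.re (by linear_combination h4 :
        (↑(∑ m, Complex.normSq ((M m).trace)) : ℂ)
          + ↑(∑ m, Complex.normSq ((M m).trace)) = 0)
    linarith
  intro m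
  have h8 : Complex.normSq ((M m).trace) = 0 :=
    le_antisymm
      (h6 ▸ Finset.single_le_sum (fun m' _ => Complex.normSq_nonneg ((M m').trace))
        (Finset.mem_univ m))
      (Complex.normSq_nonneg _)
  exact Complex.normSq_eq_zero.mp h8
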